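/- For every n ≥ 2 there exists a surjective colouring Δ : ℕ^(2) → [binom(n,2)+2] such that F_Δ = {1} ∪ { binom(t,2)+2 : 1 ≤ t ≤ n }; in particular |F_Δ| = n+1. -/

import Mathlib

/-- The set of colours appearing on edges inside `X` under the edge-colouring `Δ`
of the complete graph on `ℕ`. -/
def colorsOn {C : Type*} (Δ : ℕ → ℕ → C) (X : Set ℕ) : Set C :=
  {c | ∃ x ∈ X, ∃ y ∈ X, x ≠ y ∧ Δ x y = c}

/-- `F_Δ`: the set of values `γ(X)` (number of colours inside `X`)
over infinite `X ⊆ ℕ`. -/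
def FDelta {C : Type*} (Δ : ℕ → ℕ → C) : Set ℕ :=
  {k | ∃ X : Set ℕ, X.Infinite ∧ (colorsOn Δ X).ncard = k}


namespace Stmt8Aux

def enc (x y : ℕ) : ℕ := y.choose 2 + x

lemma choose_succ (y : ℕ) : (y+1).choose 2 = y.choose 2 + y := by
  rw [Nat.choose_succ_succ]; simp [Nat.choose_one_right]; ring

lemma enc_lt {x y n : ℕ} (hxy : x < y) (hyn : y < n) : enc x y < n.choose 2 := by
  have h2 : (y+1).choose 2 ≤ n.choose 2 := Nat.choose_le_choose 2 hyn
  have := choose_succ y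
  unfold enc; omega

lemma enc_le {x y n : ℕ} (hxy : x ≤ y) (hyn : y < n) : enc x y ≤ n.choose 2 := by
  have h2 : (y+1).choose 2 ≤ n.choose 2 := Nat.choose_le_choose 2 hyn
  have := choose_succ y
  unfold enc; omega

lemma enc_inj {x1 y1 x2 y2 : ℕ} (h1 : x1 < y1) (h2 : x2 < y2)
    (he : enc x1 y1 = enc x2 y2) : x1 = x2 ∧ y1 = y2 := by
  have key : ∀ a b c d : ℕ, a < b → c < d → b < d → enc a b < enc c d := by
    intro a b c d hab hcd hbd
    have := enc_lt hab hbd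
    unfold enc at *; omega
  rcases lt_trichotomy y1 y2 with h | h | h
  · exact absurd he (Nat.ne_of_lt (key _ _ _ _ h1 h2 h))
  · subst h; unfold enc at he; omega
  · exact absurd he.symm (Nat.ne_of_lt (key _ _ _ _ h2 h1 h))

lemma enc_surj : ∀ n c : ℕ, c < n.choose 2 → ∃ x y, x < y ∧ y < n ∧ enc x y = c := by
  intro n
  induction n with
  | zero => simp
  | succ n ih =>
    intro c hc
    rcases lt_or_ge c (n.choose 2) with h | h
    · obtain ⟨x, y, hxy, hyn, he⟩ := ih c h
      exact ⟨x, y, hxy, by omega, he⟩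
    · have := choose_succ n
      refine ⟨c - n.choose 2, n, by omega, by omega, by unfold enc; omega⟩

lemma card_filter_lt (s : Finset ℕ) :
    ((s ×ˢ s).filter fun p => p.1 < p.2).card = s.card.choose 2 := by
  induction s using Finset.induction_on_max with
  | empty => simp
  | insert a s ha ih =>
    have hans : a ∉ s := fun h => lt_irrefl a (ha a h)
    have hset : ((insert a s ×ˢ insert a s).filter fun p => p.1 < p.2)
        = ((s ×ˢ s).filter fun p => p.1 < p.2) ∪ s.image (fun x => (x, a)) := by
      ext ⟨p, q⟩
      simp only [Finset.mem_filter, Finset.mem_product, Finset.mem_insert,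
        Finset.mem_union, Finset.mem_image, Prod.mk.injEq]
      constructor
      · rintro ⟨⟨hp | hp, hq | hq⟩, hpq⟩
        · omega
        · exact absurd (ha q hq) (by omega)
        · exact Or.inr ⟨p, hp, rfl, hq.symm⟩
        · exact Or.inl ⟨⟨hp, hq⟩, hpq⟩
      · rintro (⟨⟨hp, hq⟩, hpq⟩ | ⟨x, hx, rfl, rfl⟩)
        · exact ⟨⟨Or.inr hp, Or.inr hq⟩, hpq⟩
        · exact ⟨⟨Or.inr hx, Or.inl rfl⟩, ha x hx⟩
    have hdisj : Disjoint ((s ×ˢ s).filter fun p => p.1 < p.2) (s.image (fun x => (x, a))) := by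
      rw [Finset.disjoint_left]
      rintro ⟨p, q⟩ hmem hmem2
      simp only [Finset.mem_filter, Finset.mem_product] at hmem
      simp only [Finset.mem_image, Prod.mk.injEq] at hmem2
      obtain ⟨x, hx, rfl, rfl⟩ := hmem2
      exact hans hmem.1.2
    rw [hset, Finset.card_union_of_disjoint hdisj, ih,
      Finset.card_image_of_injective _ (fun x y h => by simpa using h),
      Finset.card_insert_of_notMem hans, choose_succ]

end Stmt8Aux

namespace Stmt8Aux

def Dnat (n x y : ℕ) : ℕ :=
  if x < n ∧ y < n then enc (min x y) (max x y)
  else if n ≤ x ∧ n ≤ y then n.choose 2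
  else n.choose 2 + 1

lemma Dnat_lt (n x y : ℕ) : Dnat n x y < n.choose 2 + 2 := by
  unfold Dnat
  split
  · next h =>
    have : enc (min x y) (max x y) ≤ n.choose 2 :=
      enc_le (min_le_max) (by omega)
    omega
  · split <;> omega

def D (n : ℕ) (x y : ℕ) : Fin (n.choose 2 + 2) := ⟨Dnat n x y, Dnat_lt n x y⟩

lemma D_symm (n x y : ℕ) : D n x y = D n y x := by
  apply Fin.ext
  simp only [D, Dnat, min_comm x y, max_comm x y, and_comm]

lemma D_val_low {n x y : ℕ} (hx : x < n) (hy : y < n) (hxy : x < y) :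
    (D n x y).val = enc x y := by
  simp only [D, Dnat, if_pos (And.intro hx hy)]
  rw [min_eq_left hxy.le, max_eq_right hxy.le]

lemma D_val_high {n x y : ℕ} (hx : n ≤ x) (hy : n ≤ y) :
    (D n x y).val = n.choose 2 := by
  simp only [D, Dnat]
  rw [if_neg (by omega), if_pos (And.intro hx hy)]

lemma D_val_mixed {n x y : ℕ} (h : (x < n ∧ n ≤ y) ∨ (n ≤ x ∧ y < n)) :
    (D n x y).val = n.choose 2 + 1 := by
  simp only [D, Dnat]
  rw [if_neg (by omega), if_neg (by omega)]

end Stmt8Aux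


namespace Stmt8Aux

def highC (n : ℕ) : Fin (n.choose 2 + 2) := ⟨n.choose 2, by omega⟩
def mixC (n : ℕ) : Fin (n.choose 2 + 2) := ⟨n.choose 2 + 1, by omega⟩

lemma high_infinite {n : ℕ} {X : Set ℕ} (hX : X.Infinite) : (X \ Set.Iio n).Infinite :=
  hX.diff (Set.finite_Iio n)

lemma gamma_one {n : ℕ} {X : Set ℕ} (hX : X.Infinite) (h : X ∩ Set.Iio n = ∅) :
    (colorsOn (D n) X).ncard = 1 := by
  have hsub : ∀ x ∈ X, n ≤ x := by
    intro x hx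
    by_contra hlt
    exact absurd (Set.mem_inter hx (Set.mem_Iio.mpr (show x < n by omega))) (by rw [h]; simp)
  have : colorsOn (D n) X = {highC n} := by
    ext c
    simp only [colorsOn, Set.mem_setOf_eq, Set.mem_singleton_iff]
    constructor
    · rintro ⟨x, hx, y, hy, hxy, rfl⟩
      exact Fin.ext (D_val_high (hsub x hx) (hsub y hy))
    · rintro rfl
      obtain ⟨x, hx, y, hy, hxy⟩ := hX.nontrivial
      exact ⟨x, hx, y, hy, hxy, Fin.ext (D_val_high (hsub x hx) (hsub y hy))⟩
  rw [this, Set.ncard_singleton]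

lemma gamma_pos {n : ℕ} {X : Set ℕ} (hX : X.Infinite)
    (hne : (X ∩ Set.Iio n).Nonempty) :
    (colorsOn (D n) X).ncard = (X ∩ Set.Iio n).ncard.choose 2 + 2 := by
  have hF : (X ∩ Set.Iio n).Finite := (Set.finite_Iio n).inter_of_right X
  set F : Finset ℕ := hF.toFinset with hFdef
  have hmemF : ∀ x, x ∈ F ↔ x ∈ X ∧ x < n := by
    intro x; simp [hFdef, Set.Finite.mem_toFinset]
  set G : Finset (Fin (n.choose 2 + 2)) :=
    ((F ×ˢ F).filter fun p => p.1 < p.2).image (fun p => D n p.1 p.2) with hGdef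
  have hGval : ∀ c ∈ G, (c : Fin (n.choose 2 + 2)).val < n.choose 2 := by
    intro c hc
    simp only [hGdef, Finset.mem_image, Finset.mem_filter, Finset.mem_product] at hc
    obtain ⟨⟨p, q⟩, ⟨⟨hp, hq⟩, hpq⟩, rfl⟩ := hc
    rw [D_val_low ((hmemF p).mp hp).2 ((hmemF q).mp hq).2 hpq]
    exact enc_lt hpq ((hmemF q).mp hq).2
  have hhi := (high_infinite (n := n) hX).nontrivial
  obtain ⟨u, hu, v, hv, huv⟩ := hhi
  have hun : u ∈ X ∧ n ≤ u := ⟨hu.1, by have := hu.2; simp at this; omega⟩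
  have hvn : v ∈ X ∧ n ≤ v := ⟨hv.1, by have := hv.2; simp at this; omega⟩
  obtain ⟨a, ha⟩ := hne
  have han : a ∈ X ∧ a < n := ⟨ha.1, ha.2⟩
  have hset : colorsOn (D n) X = ↑(G ∪ {highC n, mixC n}) := by
    ext c
    simp only [colorsOn, Set.mem_setOf_eq, Finset.coe_union, Set.mem_union,
      Finset.coe_insert, Finset.coe_singleton, Set.mem_insert_iff,
      Set.mem_singleton_iff, Finset.mem_coe]
    constructor
    · rintro ⟨x, hx, y, hy, hxy, rfl⟩
      rcases lt_or_ge x n with hxn | hxn <;> rcases lt_or_ge y n with hyn | hyn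
      · left
        simp only [hGdef, Finset.mem_image, Finset.mem_filter, Finset.mem_product]
        rcases lt_or_gt_of_ne hxy with h | h
        · exact ⟨(x, y), ⟨⟨(hmemF x).mpr ⟨hx, hxn⟩, (hmemF y).mpr ⟨hy, hyn⟩⟩, h⟩, rfl⟩
        · exact ⟨(y, x), ⟨⟨(hmemF y).mpr ⟨hy, hyn⟩, (hmemF x).mpr ⟨hx, hxn⟩⟩, h⟩,
            (D_symm n y x)⟩
      · right; right; exact Fin.ext (D_val_mixed (Or.inl ⟨hxn, hyn⟩))
      · right; right; exact Fin.ext (D_val_mixed (Or.inr ⟨hxn, hyn⟩))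
      · right; left; exact Fin.ext (D_val_high hxn hyn)
    · rintro (hc | rfl | rfl)
      · simp only [hGdef, Finset.mem_image, Finset.mem_filter, Finset.mem_product] at hc
        obtain ⟨⟨p, q⟩, ⟨⟨hp, hq⟩, hpq⟩, rfl⟩ := hc
        exact ⟨p, ((hmemF p).mp hp).1, q, ((hmemF q).mp hq).1, by omega, rfl⟩
      · exact ⟨u, hun.1, v, hvn.1, huv, Fin.ext (D_val_high hun.2 hvn.2)⟩
      · exact ⟨a, han.1, u, hun.1, by omega,
          Fin.ext (D_val_mixed (Or.inl ⟨han.2, hun.2⟩))⟩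
  rw [hset, Set.ncard_coe_finset]
  have hdisj : Disjoint G ({highC n, mixC n} : Finset (Fin (n.choose 2 + 2))) := by
    rw [Finset.disjoint_left]
    intro c hc hc2
    have := hGval c hc
    simp only [Finset.mem_insert, Finset.mem_singleton] at hc2
    rcases hc2 with rfl | rfl <;> simp [highC, mixC] at this
  rw [Finset.card_union_of_disjoint hdisj]
  have hcard2 : ({highC n, mixC n} : Finset (Fin (n.choose 2 + 2))).card = 2 := by
    rw [Finset.card_insert_of_notMem (by simp [highC, mixC, Fin.ext_iff]),
      Finset.card_singleton]
  have hGcard : G.card = F.card.choose 2 := by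
    rw [hGdef, Finset.card_image_of_injOn, card_filter_lt]
    rintro ⟨p, q⟩ hpq ⟨p', q'⟩ hpq' heq
    simp only [Finset.mem_coe, Finset.mem_filter, Finset.mem_product] at hpq hpq'
    have h1 := D_val_low ((hmemF p).mp hpq.1.1).2 ((hmemF q).mp hpq.1.2).2 hpq.2
    have h2 := D_val_low ((hmemF p').mp hpq'.1.1).2 ((hmemF q').mp hpq'.1.2).2 hpq'.2
    have : enc p q = enc p' q' := by rw [← h1, ← h2]; exact congrArg Fin.val heq
    obtain ⟨h3, h4⟩ := enc_inj hpq.2 hpq'.2 this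
    simp [h3, h4]
  rw [hGcard, hcard2, Set.ncard_eq_toFinset_card _ hF]

end Stmt8Aux

namespace Stmt8Aux

lemma ncard_Iio (t : ℕ) : (Set.Iio t).ncard = t := by
  rw [← Finset.coe_Iio, Set.ncard_coe_finset]
  simp

lemma choose_two_lt {a b : ℕ} (ha : 1 ≤ a) (hab : a < b) : a.choose 2 < b.choose 2 := by
  have h1 := choose_succ a
  have h2 : (a+1).choose 2 ≤ b.choose 2 := Nat.choose_le_choose 2 (by omega)
  omega

end Stmt8Aux


open Stmt8Aux

/-- For every `n ≥ 2` there is a surjective colouring with `binom(n,2)+2` colours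
whose `F_Δ` is exactly `{1} ∪ { binom(t,2)+2 : 1 ≤ t ≤ n }`, of size `n+1`. -/
theorem stmt8 {n : ℕ} (hn : 2 ≤ n) :
    ∃ Δ : ℕ → ℕ → Fin (n.choose 2 + 2),
      (∀ x y, Δ x y = Δ y x) ∧
      (∀ c : Fin (n.choose 2 + 2), ∃ x y : ℕ, x ≠ y ∧ Δ x y = c) ∧
      FDelta Δ = {1} ∪ {k | ∃ t : ℕ, 1 ≤ t ∧ t ≤ n ∧ k = t.choose 2 + 2} ∧
      (FDelta Δ).ncard = n + 1 := by
  have hFD : FDelta (D n) = {1} ∪ {k | ∃ t : ℕ, 1 ≤ t ∧ t ≤ n ∧ k = t.choose 2 + 2} := by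
    ext k
    simp only [FDelta, Set.mem_setOf_eq, Set.mem_union, Set.mem_singleton_iff]
    constructor
    · rintro ⟨X, hX, rfl⟩
      by_cases hA : X ∩ Set.Iio n = ∅
      · exact Or.inl (gamma_one hX hA)
      · right
        have hne := Set.nonempty_iff_ne_empty.mpr hA
        have hFin : (X ∩ Set.Iio n).Finite := (Set.finite_Iio n).inter_of_right X
        refine ⟨(X ∩ Set.Iio n).ncard, (Set.ncard_pos hFin).mpr hne, ?_,
          gamma_pos hX hne⟩
        calc (X ∩ Set.Iio n).ncard ≤ (Set.Iio n).ncard :=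
              Set.ncard_le_ncard Set.inter_subset_right (Set.finite_Iio n)
          _ = n := ncard_Iio n
    · rintro (rfl | ⟨t, ht1, htn, rfl⟩)
      · refine ⟨Set.Ici n, Set.Ici_infinite n, gamma_one (Set.Ici_infinite n) ?_⟩
        ext x; simp
      · refine ⟨Set.Iio t ∪ Set.Ici n,
          (Set.Ici_infinite n).mono Set.subset_union_right, ?_⟩
        have hinter : (Set.Iio t ∪ Set.Ici n) ∩ Set.Iio n = Set.Iio t := by
          ext x; simp; omega
        have hne : ((Set.Iio t ∪ Set.Ici n) ∩ Set.Iio n).Nonempty := by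
          rw [hinter]; exact ⟨0, Set.mem_Iio.mpr (by omega)⟩
        rw [gamma_pos ((Set.Ici_infinite n).mono Set.subset_union_right) hne,
          hinter, ncard_Iio]
  refine ⟨D n, D_symm n, ?_, hFD, ?_⟩
  · -- surjectivity
    intro c
    rcases lt_trichotomy (c : ℕ) (n.choose 2) with hc | hc | hc
    · obtain ⟨x, y, hxy, hyn, he⟩ := enc_surj n c hc
      exact ⟨x, y, by omega, Fin.ext (by rw [D_val_low (by omega) hyn hxy, he])⟩
    · exact ⟨n, n + 1, by omega, Fin.ext (by rw [D_val_high le_rfl (by omega), hc])⟩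
    · have hc' : (c : ℕ) = n.choose 2 + 1 := by have := c.isLt; omega
      exact ⟨0, n, by omega,
        Fin.ext (by rw [D_val_mixed (Or.inl ⟨by omega, le_rfl⟩), hc'])⟩
  · -- ncard
    rw [hFD]
    have hset : ({1} ∪ {k | ∃ t : ℕ, 1 ≤ t ∧ t ≤ n ∧ k = t.choose 2 + 2} : Set ℕ)
        = ↑(insert 1 ((Finset.Icc 1 n).image (fun t => t.choose 2 + 2))) := by
      ext k
      simp only [Set.mem_union, Set.mem_singleton_iff, Set.mem_setOf_eq,
        Finset.coe_insert, Set.mem_insert_iff, Finset.mem_coe, Finset.mem_image,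
        Finset.mem_Icc]
      constructor
      · rintro (rfl | ⟨t, h1, h2, rfl⟩)
        · exact Or.inl rfl
        · exact Or.inr ⟨t, ⟨h1, h2⟩, rfl⟩
      · rintro (rfl | ⟨t, ⟨h1, h2⟩, rfl⟩)
        · exact Or.inl rfl
        · exact Or.inr ⟨t, h1, h2, rfl⟩
    rw [hset, Set.ncard_coe_finset]
    have hinj : Set.InjOn (fun t : ℕ => t.choose 2 + 2) (↑(Finset.Icc 1 n) : Set ℕ) := by
      intro a ha b hb hab
      simp only [Finset.coe_Icc, Set.mem_Icc] at ha hb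
      simp only at hab
      rcases lt_trichotomy a b with h | h | h
      · exact absurd hab (by have := choose_two_lt ha.1 h; omega)
      · exact h
      · exact absurd hab (by have := choose_two_lt hb.1 h; omega)
    have hnotmem : (1 : ℕ) ∉ (Finset.Icc 1 n).image (fun t => t.choose 2 + 2) := by
      simp only [Finset.mem_image, Finset.mem_Icc]
      rintro ⟨t, _, ht⟩; omega
    rw [Finset.card_insert_of_notMem hnotmem, Finset.card_image_of_injOn hinj,
      Nat.card_Icc]
    omega
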